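/- Let F be a C¹ norm on ℝⁿ with C¹ dual norm F°. Then for every x ≠ 0: F(x) · ∇F°(∇F(x)) = x and F°(x) · ∇F(∇F°(x)) = x. -/

import Mathlib

open InnerProductSpace

variable {E : Type*} [NormedAddCommGroup E] [InnerProductSpace ℝ E] [CompleteSpace E]

lemma aux_inner_gradient (f : E → ℝ) (x v : E) :
    (inner ℝ (gradient f x) v : ℝ) = fderiv ℝ f x v := by
  rw [gradient, toDual_symm_apply]

lemma aux_euler (f : E → ℝ) (x : E) (hd : DifferentiableAt ℝ f x)
    (hhom : ∀ t : ℝ, 0 < t → f (t • x) = t * f x) :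
    (inner ℝ (gradient f x) x : ℝ) = f x := by
  rw [aux_inner_gradient]
  have hline : HasDerivAt (fun t : ℝ => t • x) x 1 := by
    simpa using (hasDerivAt_id (1 : ℝ)).smul_const x
  have h1 : HasDerivAt (fun t : ℝ => f (t • x)) (fderiv ℝ f x x) 1 := by
    have hf : HasFDerivAt f (fderiv ℝ f x) ((1 : ℝ) • x) := by
      simpa using hd.hasFDerivAt
    exact hf.comp_hasDerivAt 1 hline
  have h2 : HasDerivAt (fun t : ℝ => t * f x) (f x) 1 := by
    simpa using (hasDerivAt_id (1 : ℝ)).mul_const (f x)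
  have heq : (fun t : ℝ => f (t • x)) =ᶠ[nhds 1] fun t => t * f x := by
    filter_upwards [Ioi_mem_nhds zero_lt_one] with t ht using hhom t ht
  exact h1.unique (h2.congr_of_eventuallyEq heq)

lemma aux_subgrad (f : E → ℝ) (hf : ConvexOn ℝ Set.univ f) (x y : E)
    (hd : DifferentiableAt ℝ f x) :
    (inner ℝ (gradient f x) (y - x) : ℝ) ≤ f y - f x := by
  rw [aux_inner_gradient]
  set φ : ℝ → ℝ := f ∘ (AffineMap.lineMap x y : ℝ →ᵃ[ℝ] E) with hφ
  have hφconv : ConvexOn ℝ Set.univ φ := by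
    simpa using hf.comp_affineMap (AffineMap.lineMap x y : ℝ →ᵃ[ℝ] E)
  have hline : HasDerivAt (fun t : ℝ => (AffineMap.lineMap x y : ℝ →ᵃ[ℝ] E) t) (y - x) 0 := by
    have h2 : HasDerivAt (fun t : ℝ => (1 - t) • x + t • y) (y - x) 0 := by
      have h := (((hasDerivAt_const (0:ℝ) (1:ℝ)).sub (hasDerivAt_id 0)).smul_const x).add
        ((hasDerivAt_id 0).smul_const y)
      simp only [id, zero_sub, neg_smul, one_smul, neg_add_eq_sub] at h
      exact h
    have : (fun t : ℝ => (AffineMap.lineMap x y : ℝ →ᵃ[ℝ] E) t) =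
        fun t : ℝ => (1 - t) • x + t • y := by
      funext t
      simp [AffineMap.lineMap_apply_module, sub_smul, smul_sub]
    rw [this]
    exact h2
  have hφd : HasDerivAt φ (fderiv ℝ f x (y - x)) 0 := by
    have hf0 : HasFDerivAt f (fderiv ℝ f x) ((AffineMap.lineMap x y : ℝ →ᵃ[ℝ] E) 0) := by
      simpa using hd.hasFDerivAt
    exact hf0.comp_hasDerivAt 0 hline
  have h := hφconv.deriv_le_slope (Set.mem_univ (0:ℝ)) (Set.mem_univ (1:ℝ)) zero_lt_one
    hφd.differentiableAt
  rw [hφd.deriv] at h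
  simpa [slope, φ] using h

lemma aux_min (φ : E → ℝ) (c : ℝ) (a y : E) (hφ : DifferentiableAt ℝ φ y)
    (hmin : IsLocalMin (fun w => c * φ w - (inner ℝ a w : ℝ)) y) :
    c • gradient φ y = a := by
  have hd : HasFDerivAt (fun w => c * φ w - (innerSL ℝ a) w)
      (c • fderiv ℝ φ y - innerSL ℝ a) y :=
    (hφ.hasFDerivAt.const_mul c).sub (innerSL ℝ a).hasFDerivAt
  have h0 : fderiv ℝ (fun w => c * φ w - (innerSL ℝ a) w) y = 0 := by
    apply IsLocalMin.fderiv_eq_zero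
    simpa [innerSL_apply_apply] using hmin
  rw [hd.fderiv] at h0
  apply ext_inner_right ℝ
  intro v
  have := congrFun (congrArg DFunLike.coe h0) v
  simp only [ContinuousLinearMap.sub_apply, ContinuousLinearMap.smul_apply,
    ContinuousLinearMap.zero_apply, innerSL_apply_apply, sub_eq_zero] at this
  rw [real_inner_smul_left, aux_inner_gradient]
  simpa using this
/-- For a C¹ norm `F` on `ℝⁿ` with C¹ dual norm `F°`: for every `x ≠ 0`,
`F(x) • ∇F°(∇F(x)) = x` and `F°(x) • ∇F(∇F°(x)) = x`. -/
theorem stmt_7 (n : ℕ) (hn : 1 ≤ n) (F : EuclideanSpace ℝ (Fin n) → ℝ)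
    (hFconv : ConvexOn ℝ Set.univ F)
    (hFhom : ∀ (a : ℝ) (ξ : EuclideanSpace ℝ (Fin n)), F (a • ξ) = |a| * F ξ)
    (hFpos : ∀ ξ : EuclideanSpace ℝ (Fin n), ξ ≠ 0 → 0 < F ξ)
    (Fo : EuclideanSpace ℝ (Fin n) → ℝ)
    (hFo : ∀ x, Fo x = ⨆ ξ : {ξ : EuclideanSpace ℝ (Fin n) // ξ ≠ 0},
      (inner ℝ x ξ.1 : ℝ) / F ξ.1)
    (hFdiff : ∀ x : EuclideanSpace ℝ (Fin n), x ≠ 0 → DifferentiableAt ℝ F x)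
    (hFdiffCont : ContinuousOn (gradient F) {x | x ≠ 0})
    (hFodiff : ∀ x : EuclideanSpace ℝ (Fin n), x ≠ 0 → DifferentiableAt ℝ Fo x)
    (hFodiffCont : ContinuousOn (gradient Fo) {x | x ≠ 0}) :
    ∀ x : EuclideanSpace ℝ (Fin n), x ≠ 0 →
      F x • gradient Fo (gradient F x) = x ∧ Fo x • gradient F (gradient Fo x) = x := by
  have i0 : Fin n := ⟨0, hn⟩
  set ξ0 : EuclideanSpace ℝ (Fin n) := EuclideanSpace.single i0 (1:ℝ) with hξ0def
  have hξ0norm : ‖ξ0‖ = 1 := by simp [ξ0]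
  have hξ0 : ξ0 ≠ 0 := by
    intro h; rw [h] at hξ0norm; simp at hξ0norm
  haveI : Nonempty {ξ : EuclideanSpace ℝ (Fin n) // ξ ≠ 0} := ⟨⟨ξ0, hξ0⟩⟩
  have hF0 : F 0 = 0 := by simpa using hFhom 0 0
  -- lower bound on F
  obtain ⟨z0, hz0s, hz0min⟩ : ∃ z ∈ Metric.sphere (0 : EuclideanSpace ℝ (Fin n)) 1,
      IsMinOn F (Metric.sphere 0 1) z := by
    apply (isCompact_sphere 0 1).exists_isMinOn
    · exact ⟨ξ0, by simpa [mem_sphere_zero_iff_norm] using hξ0norm⟩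
    · intro x hx
      have hxne : x ≠ 0 := by
        rw [mem_sphere_zero_iff_norm] at hx
        exact norm_ne_zero_iff.mp (by rw [hx]; norm_num)
      exact ((hFdiff x hxne).continuousAt).continuousWithinAt
  have hz0ne : z0 ≠ 0 := by
    rw [mem_sphere_zero_iff_norm] at hz0s
    exact norm_ne_zero_iff.mp (by rw [hz0s]; norm_num)
  set c := F z0 with hcdef
  have hc : 0 < c := hFpos z0 hz0ne
  have hlow : ∀ ξ, c * ‖ξ‖ ≤ F ξ := by
    intro ξ
    rcases eq_or_ne ξ 0 with h | h
    · simp [h, hF0]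
    · have hξn : (0:ℝ) < ‖ξ‖ := norm_pos_iff.mpr h
      have hu : (‖ξ‖⁻¹ • ξ) ∈ Metric.sphere (0 : EuclideanSpace ℝ (Fin n)) 1 := by
        rw [mem_sphere_zero_iff_norm, norm_smul, norm_inv, norm_norm,
          inv_mul_cancel₀ hξn.ne']
      have h1 : c ≤ F (‖ξ‖⁻¹ • ξ) := hz0min hu
      have h2 : F (‖ξ‖⁻¹ • ξ) = ‖ξ‖⁻¹ * F ξ := by
        rw [hFhom, abs_of_pos (by positivity)]
      rw [h2] at h1
      calc c * ‖ξ‖ ≤ (‖ξ‖⁻¹ * F ξ) * ‖ξ‖ := by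
            exact mul_le_mul_of_nonneg_right h1 hξn.le
        _ = F ξ := by field_simp
  have hbdd : ∀ x, BddAbove (Set.range fun ξ : {ξ : EuclideanSpace ℝ (Fin n) // ξ ≠ 0} =>
      (inner ℝ x ξ.1 : ℝ) / F ξ.1) := by
    intro x
    refine ⟨‖x‖ / c, ?_⟩
    rintro r ⟨⟨ξ, hξ⟩, rfl⟩
    have hξn : (0:ℝ) < ‖ξ‖ := norm_pos_iff.mpr hξ
    calc (inner ℝ x ξ : ℝ) / F ξ ≤ (‖x‖ * ‖ξ‖) / (c * ‖ξ‖) :=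
          div_le_div₀ (by positivity) (real_inner_le_norm x ξ) (by positivity) (hlow ξ)
      _ = ‖x‖ / c := by rw [mul_div_mul_right _ _ hξn.ne']
  have hFo_ge : ∀ (x ξ : EuclideanSpace ℝ (Fin n)), ξ ≠ 0 →
      (inner ℝ x ξ : ℝ) / F ξ ≤ Fo x := by
    intro x ξ hξ
    rw [hFo]
    exact le_ciSup (hbdd x) ⟨ξ, hξ⟩
  have hFo_mul : ∀ (x ξ : EuclideanSpace ℝ (Fin n)), ξ ≠ 0 →
      (inner ℝ x ξ : ℝ) ≤ Fo x * F ξ := fun x ξ hξ =>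
    (div_le_iff₀ (hFpos ξ hξ)).mp (hFo_ge x ξ hξ)
  have hFo0 : Fo 0 = 0 := by
    rw [hFo]
    have : ∀ ξ : {ξ : EuclideanSpace ℝ (Fin n) // ξ ≠ 0},
        (inner ℝ (0 : EuclideanSpace ℝ (Fin n)) ξ.1 : ℝ) / F ξ.1 = 0 := by
      intro ξ; simp
    simp only [this, ciSup_const]
  have hFopos : ∀ x : EuclideanSpace ℝ (Fin n), x ≠ 0 → 0 < Fo x := by
    intro x hx
    have h := hFo_ge x x hx
    have h2 : (0:ℝ) < (inner ℝ x x : ℝ) / F x := by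
      apply div_pos _ (hFpos x hx)
      rw [real_inner_self_eq_norm_sq]
      have hxn : ‖x‖ ≠ 0 := norm_ne_zero_iff.mpr hx
      positivity
    linarith
  have hFoconv : ConvexOn ℝ Set.univ Fo := by
    refine ⟨convex_univ, ?_⟩
    intro x _ y _ a b ha hb hab
    rw [hFo (a • x + b • y)]
    apply ciSup_le
    rintro ⟨ξ, hξ⟩
    have h1 : (inner ℝ (a • x + b • y) ξ : ℝ) / F ξ
        = a * ((inner ℝ x ξ : ℝ) / F ξ) + b * ((inner ℝ y ξ : ℝ) / F ξ) := by
      rw [inner_add_left, real_inner_smul_left, real_inner_smul_left, add_div,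
        mul_div_assoc, mul_div_assoc]
    rw [h1]
    exact add_le_add (mul_le_mul_of_nonneg_left (hFo_ge x ξ hξ) ha)
      (mul_le_mul_of_nonneg_left (hFo_ge y ξ hξ) hb)
  have hFo_hom : ∀ t : ℝ, 0 < t → ∀ x, Fo (t • x) = t * Fo x := by
    intro t ht x
    rw [hFo (t • x), hFo x, Real.mul_iSup_of_nonneg ht.le]
    congr 1
    funext ξ
    rw [real_inner_smul_left, mul_div_assoc]
  have hF_hom : ∀ t : ℝ, 0 < t → ∀ x, F (t • x) = t * F x := by
    intro t ht x; rw [hFhom, abs_of_pos ht]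
  have hEulerF : ∀ x : EuclideanSpace ℝ (Fin n), x ≠ 0 →
      (inner ℝ (gradient F x) x : ℝ) = F x := fun x hx =>
    aux_euler F x (hFdiff x hx) (fun t ht => hF_hom t ht x)
  have hgradFne : ∀ x : EuclideanSpace ℝ (Fin n), x ≠ 0 → gradient F x ≠ 0 := by
    intro x hx h
    have h2 := hEulerF x hx
    rw [h, inner_zero_left] at h2
    exact (hFpos x hx).ne' h2.symm
  have hFoGradF : ∀ x : EuclideanSpace ℝ (Fin n), x ≠ 0 → Fo (gradient F x) = 1 := by
    intro x hx
    apply le_antisymm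
    · rw [hFo]
      apply ciSup_le
      rintro ⟨ξ, hξ⟩
      rw [div_le_one (hFpos ξ hξ)]
      have h := aux_subgrad F hFconv x ξ (hFdiff x hx)
      rw [inner_sub_right, hEulerF x hx] at h
      linarith
    · have h := hFo_ge (gradient F x) x hx
      rwa [hEulerF x hx, div_self (hFpos x hx).ne'] at h
  have part1 : ∀ x : EuclideanSpace ℝ (Fin n), x ≠ 0 →
      F x • gradient Fo (gradient F x) = x := by
    intro x hx
    have hy0 : gradient F x ≠ 0 := hgradFne x hx
    apply aux_min Fo (F x) x (gradient F x) (hFodiff _ hy0)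
    have h0 : F x * Fo (gradient F x) - (inner ℝ x (gradient F x) : ℝ) = 0 := by
      rw [hFoGradF x hx, real_inner_comm, hEulerF x hx]; ring
    refine Filter.Eventually.of_forall fun w => ?_
    show F x * Fo (gradient F x) - (inner ℝ x (gradient F x) : ℝ)
      ≤ F x * Fo w - (inner ℝ x w : ℝ)
    rw [h0]
    rcases eq_or_ne w 0 with h | h
    · simp [h, hFo0]
    · have h2 := hFo_mul w x hx
      rw [real_inner_comm] at h2
      linarith
  have hEulerFo : ∀ x : EuclideanSpace ℝ (Fin n), x ≠ 0 →
      (inner ℝ (gradient Fo x) x : ℝ) = Fo x := fun x hx =>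
    aux_euler Fo x (hFodiff x hx) (fun t ht => hFo_hom t ht x)
  have part2 : ∀ x : EuclideanSpace ℝ (Fin n), x ≠ 0 →
      Fo x • gradient F (gradient Fo x) = x := by
    intro x hx
    have hz0 : gradient Fo x ≠ 0 := by
      intro h
      have h2 := hEulerFo x hx
      rw [h, inner_zero_left] at h2
      exact (hFopos x hx).ne' h2.symm
    have hsub : ∀ w, (inner ℝ (gradient Fo x) w : ℝ) ≤ Fo w := by
      intro w
      have h := aux_subgrad Fo hFoconv x w (hFodiff x hx)
      rw [inner_sub_right, hEulerFo x hx] at h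
      linarith
    have hFz_ge : 1 ≤ F (gradient Fo x) := by
      have h := hFo_ge x (gradient Fo x) hz0
      rw [real_inner_comm, hEulerFo x hx, div_le_iff₀ (hFpos _ hz0)] at h
      exact (le_mul_iff_one_le_right (hFopos x hx)).mp h
    have hFz_le : F (gradient Fo x) ≤ 1 := by
      have hu := hFoGradF (gradient Fo x) hz0
      have he := hEulerF (gradient Fo x) hz0
      have h2 := hsub (gradient F (gradient Fo x))
      rw [hu] at h2
      rw [real_inner_comm] at he
      linarith
    have hFz : F (gradient Fo x) = 1 := le_antisymm hFz_le hFz_ge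
    apply aux_min F (Fo x) x (gradient Fo x) (hFdiff _ hz0)
    have h0 : Fo x * F (gradient Fo x) - (inner ℝ x (gradient Fo x) : ℝ) = 0 := by
      rw [hFz, real_inner_comm, hEulerFo x hx]; ring
    refine Filter.Eventually.of_forall fun w => ?_
    show Fo x * F (gradient Fo x) - (inner ℝ x (gradient Fo x) : ℝ)
      ≤ Fo x * F w - (inner ℝ x w : ℝ)
    rw [h0]
    rcases eq_or_ne w 0 with h | h
    · simp [h, hF0]
    · have h2 := hFo_mul x w h
      linarith
  exact fun x hx => ⟨part1 x hx, part2 x hx⟩
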